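/- Let m ≥ 2 and let u = (u_{m−1}, …, u_1, u_0) be a path in Q (with u_0 applied first) such that for every 0 ≤ t ≤ m−2 the two-arrow factor u_{t+1}u_t is one of the reducible words q_i p_{i+1}, p_i q_{i−1}, s_i p_i, s_i q_i. Then there exists 0 ≤ i < n such that u equals one of the following four words (read left to right, rightmost arrow applied first): the length-m alternating word in p_{i+1}, q_i beginning with p_{i+1} (the type I ambiguity P^m_{i+1}); the length-m alternating word in q_i, p_{i+1} beginning with q_i (the type I ambiguity Q^m_i); s_{i+1} followed by the length-(m−1) alternating word beginning with p_{i+1} (the type II ambiguity sP^m_{i+1}); or s_i followed by the length-(m−1) alternating word beginning with q_i (the type II ambiguity sQ^m_i). Conversely, each of these four words has all of its two-arrow factors among the reducible words. Consequently, for every m ≥ 2 there are exactly 4n such paths of length m. -/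

import Mathlib

/-- The arrows of the KLRW quiver on vertices `{0, …, n}`:
`p i : i → i+1` and `q i : i+1 → i` (for `0 ≤ i < n`), and loops `s i : i → i`.
(Here `p i` stands for the paper's `p_{i+1}` and `q i` for `q_i`.) -/
inductive Arrow (n : ℕ) where
  | p (i : Fin n)
  | q (i : Fin n)
  | s (i : Fin (n + 1))
deriving DecidableEq

/-- `RedPair b a` holds when the two-letter word `b·a` (with `a` applied first) is one of
the reducible words `q_i p_{i+1}`, `p_i q_{i−1}`, `s_i p_i`, `s_i q_i` of the KLRW
reduction system.  Paths are written in word order (leftmost = last applied). -/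
inductive RedPair {n : ℕ} : Arrow n → Arrow n → Prop where
  | qp (i : Fin n) : RedPair (.q i) (.p i)
  | pq (i : Fin n) : RedPair (.p i) (.q i)
  | sp (i : Fin n) : RedPair (.s i.succ) (.p i)
  | sq (i : Fin n) : RedPair (.s i.castSucc) (.q i)

/-- `alt i true m` is the length-`m` word (in word order, leftmost first) alternating in
`p_{i+1}, q_i` and beginning with `p_{i+1}` (the type I ambiguity `P^m_{i+1}`);
`alt i false m` begins with `q_i` (the type I ambiguity `Q^m_i`). -/
def alt {n : ℕ} (i : Fin n) : Bool → ℕ → List (Arrow n)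
  | _, 0 => []
  | true, m + 1 => .p i :: alt i false m
  | false, m + 1 => .q i :: alt i true m

lemma alt_length {n : ℕ} (i : Fin n) : ∀ (m : ℕ) (b : Bool), (alt i b m).length = m := by
  intro m
  induction m with
  | zero => intro b; cases b <;> rfl
  | succ k ih => intro b; cases b <;> simp [alt, ih]

lemma alt_chain {n : ℕ} (i : Fin n) : ∀ (m : ℕ) (b : Bool), List.Chain' RedPair (alt i b m) := by
  intro m
  induction m with
  | zero => intro b; cases b <;> simp [alt, List.Chain']
  | succ k ih =>
    intro b
    cases k with
    | zero => cases b <;> simp [alt, List.Chain']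
    | succ l =>
      cases b
      · show List.Chain' RedPair (.q i :: .p i :: alt i false l)
        unfold List.Chain'; rw [List.isChain_cons_cons]
        exact ⟨.qp i, ih true⟩
      · show List.Chain' RedPair (.p i :: .q i :: alt i true l)
        unfold List.Chain'; rw [List.isChain_cons_cons]
        exact ⟨.pq i, ih false⟩

lemma classify {n : ℕ} (m : ℕ) (hm : 2 ≤ m) :
    ∀ u : List (Arrow n), u.length = m → List.Chain' RedPair u →
      ∃ i : Fin n,
        u = alt i true m ∨ u = alt i false m ∨
        u = Arrow.s i.succ :: alt i true (m - 1) ∨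
        u = Arrow.s i.castSucc :: alt i false (m - 1) := by
  induction m, hm using Nat.le_induction with
  | base =>
    intro u hlen hch
    match u with
    | [a, b] =>
      have hab : RedPair a b := (List.isChain_pair).1 hch
      cases hab with
      | qp i => exact ⟨i, Or.inr (Or.inl rfl)⟩
      | pq i => exact ⟨i, Or.inl rfl⟩
      | sp i => exact ⟨i, Or.inr (Or.inr (Or.inl rfl))⟩
      | sq i => exact ⟨i, Or.inr (Or.inr (Or.inr rfl))⟩
  | succ m hm ih =>
    intro u hlen hch
    match u with
    | a :: t =>
      have htlen : t.length = m := by simpa using hlen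
      have htch : List.Chain' RedPair t := hch.tail
      obtain ⟨i, h | h | h | h⟩ := ih t htlen htch
      · -- t = alt i true m, starts with p i since m ≥ 2
        obtain ⟨l, rfl⟩ : ∃ l, m = l + 1 := ⟨m - 1, by omega⟩
        have hhead : RedPair a (.p i) := by
          have := List.isChain_cons_cons.1 (h ▸ hch)
          exact this.1
        cases hhead with
        | qp => exact ⟨i, Or.inr (Or.inl (by rw [h]; rfl))⟩
        | sp => exact ⟨i, Or.inr (Or.inr (Or.inl (by rw [h]; rfl)))⟩
      · obtain ⟨l, rfl⟩ : ∃ l, m = l + 1 := ⟨m - 1, by omega⟩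
        have hhead : RedPair a (.q i) := by
          have := List.isChain_cons_cons.1 (h ▸ hch)
          exact this.1
        cases hhead with
        | pq => exact ⟨i, Or.inl (by rw [h]; rfl)⟩
        | sq => exact ⟨i, Or.inr (Or.inr (Or.inr (by rw [h]; rfl)))⟩
      · exfalso
        have hhead : RedPair a (.s i.succ) := (List.isChain_cons_cons.1 (h ▸ hch)).1
        cases hhead
      · exfalso
        have hhead : RedPair a (.s i.castSucc) := (List.isChain_cons_cons.1 (h ▸ hch)).1
        cases hhead

def amb {n : ℕ} (m : ℕ) (i : Fin n) : Bool → Bool → List (Arrow n)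
  | b, false => alt i b m
  | true, true => Arrow.s i.succ :: alt i true (m - 1)
  | false, true => Arrow.s i.castSucc :: alt i false (m - 1)

/-- Classification of ambiguities: for `m ≥ 2`, every length-`m` path all of whose
two-arrow factors are reducible words is, for some `i`, one of `P^m_{i+1}`, `Q^m_i`,
`sP^m_{i+1} = s_{i+1}·(alternating word of length m−1 beginning with p_{i+1})`, or
`sQ^m_i = s_i·(alternating word of length m−1 beginning with q_i)`; conversely each of
these four words has all two-arrow factors reducible; consequently there are exactly
`4n` such paths of length `m`. -/
theorem ambiguity_classification (n m : ℕ) (hm : 2 ≤ m) :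
    (∀ u : List (Arrow n), u.length = m → List.Chain' RedPair u →
      ∃ i : Fin n,
        u = alt i true m ∨ u = alt i false m ∨
        u = Arrow.s i.succ :: alt i true (m - 1) ∨
        u = Arrow.s i.castSucc :: alt i false (m - 1)) ∧
    (∀ i : Fin n,
        List.Chain' RedPair (alt i true m) ∧
        List.Chain' RedPair (alt i false m) ∧
        List.Chain' RedPair (Arrow.s i.succ :: alt i true (m - 1)) ∧
        List.Chain' RedPair (Arrow.s i.castSucc :: alt i false (m - 1))) ∧
    {u : List (Arrow n) | u.length = m ∧ List.Chain' RedPair u}.ncard = 4 * n := by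
  obtain ⟨l, rfl⟩ : ∃ l, m = l + 2 := ⟨m - 2, by omega⟩
  have hm1 : l + 2 - 1 = l + 1 := rfl
  have hchains : ∀ i : Fin n,
      List.Chain' RedPair (alt i true (l + 2)) ∧
      List.Chain' RedPair (alt i false (l + 2)) ∧
      List.Chain' RedPair (Arrow.s i.succ :: alt i true (l + 2 - 1)) ∧
      List.Chain' RedPair (Arrow.s i.castSucc :: alt i false (l + 2 - 1)) := by
    intro i
    refine ⟨alt_chain i _ _, alt_chain i _ _, ?_, ?_⟩
    · rw [hm1]
      show List.Chain' RedPair (.s i.succ :: .p i :: alt i false l)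
      unfold List.Chain'; rw [List.isChain_cons_cons]
      exact ⟨.sp i, alt_chain i (l + 1) true⟩
    · rw [hm1]
      show List.Chain' RedPair (.s i.castSucc :: .q i :: alt i true l)
      unfold List.Chain'; rw [List.isChain_cons_cons]
      exact ⟨.sq i, alt_chain i (l + 1) false⟩
  refine ⟨classify _ hm, hchains, ?_⟩
  have hinj : Function.Injective
      (fun x : Fin n × Bool × Bool => amb (l + 2) x.1 x.2.1 x.2.2) := by
    rintro ⟨i, b, c⟩ ⟨j, b', c'⟩ h
    cases b <;> cases c <;> cases b' <;> cases c' <;>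
      simp only [amb, alt, hm1, List.cons.injEq, Arrow.p.injEq, Arrow.q.injEq,
        Arrow.s.injEq, Fin.succ_inj, Fin.castSucc_inj, reduceCtorEq, false_and,
        and_false] at h <;>
      (obtain ⟨rfl, -⟩ := h; rfl)
  have hset : {u : List (Arrow n) | u.length = l + 2 ∧ List.Chain' RedPair u}
      = ↑(Finset.univ.image (fun x : Fin n × Bool × Bool => amb (l + 2) x.1 x.2.1 x.2.2)) := by
    ext u
    simp only [Set.mem_setOf_eq, Finset.coe_image, Finset.coe_univ, Set.image_univ,
      Set.mem_range]
    constructor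
    · rintro ⟨h1, h2⟩
      obtain ⟨i, h | h | h | h⟩ := classify _ hm u h1 h2
      exacts [⟨(i, true, false), h.symm⟩, ⟨(i, false, false), h.symm⟩,
        ⟨(i, true, true), h.symm⟩, ⟨(i, false, true), h.symm⟩]
    · rintro ⟨⟨i, b, c⟩, rfl⟩
      cases b <;> cases c <;>
        simp [amb, alt_length, hm1, hchains i, (hchains i).1, (hchains i).2.1,
          hm1 ▸ (hchains i).2.2.1, hm1 ▸ (hchains i).2.2.2]
  rw [hset, Set.ncard_coe_finset, Finset.card_image_of_injective _ hinj]
  simp only [Finset.card_univ, Fintype.card_prod, Fintype.card_fin, Fintype.card_bool]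
  ring
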